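/- Let E be a barrelled locally convex Hausdorff topological vector space over ℂ in which every bounded subset is relatively compact (i.e. E is a Montel space), and let T : E → E be a continuous linear operator. Then the following are equivalent: (i) T is Cesàro bounded and lim_{n→∞} (1/n)·Tⁿx = 0 for every x ∈ E; (ii) T is mean ergodic; (iii) T is uniformly mean ergodic. -/

import Mathlib

open Filter Topology

/-- The `n`-th Cesàro mean of `T` applied to `x`: `(1/n) ∑_{m=1}^{n} Tᵐ x`. -/
noncomputable def cesaroMean {E : Type*} [AddCommGroup E] [Module ℂ E] [TopologicalSpace E]
    (T : E →L[ℂ] E) (n : ℕ) (x : E) : E :=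
  (n : ℂ)⁻¹ • ∑ m ∈ Finset.Icc 1 n, (T ^ m) x


set_option linter.unusedSectionVars false
set_option maxHeartbeats 1000000
open Uniformity Pointwise

lemma natCast_add_one_ne (n : ℕ) : ((n : ℂ) + 1) ≠ 0 := by
  have h := (Nat.cast_ne_zero (R := ℂ)).2 n.succ_ne_zero
  push_cast at h
  exact h

lemma tendsto_inv_natCast_add (k : ℕ) :
    Tendsto (fun n : ℕ => ((n : ℂ) + (k : ℂ))⁻¹) atTop (𝓝 0) := by
  have h : Tendsto (fun n : ℕ => ((n : ℝ) + (k : ℝ))⁻¹) atTop (𝓝 0) :=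
    tendsto_inv_atTop_zero.comp
      (tendsto_atTop_add_const_right atTop _ tendsto_natCast_atTop_atTop)
  have h2 : Tendsto (fun n : ℕ => ((((n : ℝ) + (k : ℝ))⁻¹ : ℝ) : ℂ)) atTop (𝓝 ((0 : ℝ) : ℂ)) :=
    (Complex.continuous_ofReal.tendsto _).comp h
  simpa [Complex.ofReal_inv] using h2

lemma tendsto_ratio1 : Tendsto (fun n : ℕ => (n : ℂ) / ((n : ℂ) + 1)) atTop (𝓝 1) := by
  have key : ∀ n : ℕ, (n : ℂ) / ((n : ℂ) + 1) = 1 - ((n : ℂ) + 1)⁻¹ := by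
    intro n
    field_simp [natCast_add_one_ne n]
    ring
  simp only [key]
  have h := (tendsto_const_nhds (x := (1:ℂ)) (f := atTop (α := ℕ))).sub
    (by simpa using tendsto_inv_natCast_add 1)
  simpa using h

lemma tendsto_ratio2 : Tendsto (fun n : ℕ => ((n : ℂ) + 2) / ((n : ℂ) + 1)) atTop (𝓝 1) := by
  have key : ∀ n : ℕ, ((n : ℂ) + 2) / ((n : ℂ) + 1) = 1 + ((n : ℂ) + 1)⁻¹ := by
    intro n
    field_simp [natCast_add_one_ne n]
    ring
  simp only [key]
  have h := (tendsto_const_nhds (x := (1:ℂ)) (f := atTop (α := ℕ))).add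
    (by simpa using tendsto_inv_natCast_add 1)
  simpa using h

section Aux

variable {E : Type*} [AddCommGroup E] [Module ℂ E] [TopologicalSpace E]
  [IsTopologicalAddGroup E] [ContinuousConstSMul ℂ E] (T : E →L[ℂ] E)

noncomputable def cesaroCLM (n : ℕ) : E →L[ℂ] E :=
  (n : ℂ)⁻¹ • ∑ m ∈ Finset.Icc 1 n, T ^ m

lemma cesaroCLM_apply (n : ℕ) (x : E) : cesaroCLM T n x = cesaroMean T n x := by
  simp [cesaroCLM, cesaroMean, ContinuousLinearMap.sum_apply]

lemma cesaroMean_eq_range (n : ℕ) (x : E) :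
    cesaroMean T n x = (n : ℂ)⁻¹ • ∑ k ∈ Finset.range n, (T ^ (k + 1)) x := by
  rw [cesaroMean, show Finset.Icc 1 n = Finset.Ico 1 (n+1) from by rw [Finset.Ico_add_one_right_eq_Icc],
    Finset.sum_Ico_eq_sum_range]
  simp [add_comm]

lemma smul_cesaroMean (n : ℕ) (x : E) :
    (n : ℂ) • cesaroMean T n x = ∑ k ∈ Finset.range n, (T ^ (k + 1)) x := by
  rcases Nat.eq_zero_or_pos n with rfl | hn
  · simp
  · rw [cesaroMean_eq_range, smul_smul, mul_inv_cancel₀ (by exact_mod_cast hn.ne'), one_smul]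

lemma cesaro_comm_sub (n : ℕ) (x : E) :
    T (cesaroMean T n x) - cesaroMean T n x = (n : ℂ)⁻¹ • ((T ^ (n + 1)) x - T x) := by
  rw [cesaroMean_eq_range, map_smul, map_sum, ← smul_sub, ← Finset.sum_sub_distrib]
  congr 1
  have : ∀ k, T ((T ^ (k + 1)) x) = (T ^ (k + 2)) x := by
    intro k
    rw [pow_succ' T (k+1)]
    rfl
  calc ∑ k ∈ Finset.range n, (T ((T ^ (k + 1)) x) - (T ^ (k + 1)) x)
      = ∑ k ∈ Finset.range n, ((T ^ (k + 1 + 1)) x - (T ^ (k + 1)) x) := by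
        refine Finset.sum_congr rfl fun k _ => ?_; rw [this k]
    _ = (T ^ (n + 1)) x - (T ^ (0 + 1)) x := Finset.sum_range_sub (fun k => (T ^ (k + 1)) x) n
    _ = (T ^ (n + 1)) x - T x := by rw [zero_add, pow_one]

lemma cesaroMean_sub (n : ℕ) (x : E) :
    cesaroMean T n (x - T x) = (n : ℂ)⁻¹ • (T x - (T ^ (n + 1)) x) := by
  rw [cesaroMean_eq_range]
  congr 1
  have : ∀ k, (T ^ (k + 1)) (x - T x) = (T ^ (k + 1)) x - (T ^ (k + 1 + 1)) x := by
    intro k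
    rw [map_sub, pow_succ T (k+1)]
    rfl
  calc ∑ k ∈ Finset.range n, (T ^ (k + 1)) (x - T x)
      = ∑ k ∈ Finset.range n, ((T ^ (k + 1)) x - (T ^ (k + 1 + 1)) x) :=
        Finset.sum_congr rfl fun k _ => this k
    _ = (T ^ (0 + 1)) x - (T ^ (n + 1)) x := Finset.sum_range_sub' (fun k => (T ^ (k + 1)) x) n
    _ = T x - (T ^ (n + 1)) x := by rw [zero_add, pow_one]

lemma pow_apply_fixed {y : E} (hy : T y = y) (m : ℕ) : (T ^ m) y = y := by
  induction m with
  | zero => rfl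
  | succ k ih => rw [pow_succ, ContinuousLinearMap.mul_apply, hy, ih]

lemma cesaroMean_fixed {n : ℕ} (hn : n ≠ 0) {y : E} (hy : T y = y) :
    cesaroMean T n y = y := by
  rw [cesaroMean_eq_range]
  have : ∑ k ∈ Finset.range n, (T ^ (k + 1)) y = n • y :=
    by rw [Finset.sum_congr rfl fun k _ => pow_apply_fixed T hy (k+1), Finset.sum_const,
      Finset.card_range]
  rw [this, ← Nat.cast_smul_eq_nsmul ℂ, smul_smul,
    inv_mul_cancel₀ (by exact_mod_cast hn), one_smul]

lemma exists_sub_cesaroMean {n : ℕ} (hn : n ≠ 0) (x : E) :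
    ∃ w : E, x - cesaroMean T n x = w - T w := by
  refine ⟨(n : ℂ)⁻¹ • ∑ k ∈ Finset.range n, ∑ j ∈ Finset.range (k + 1), (T ^ j) x, ?_⟩
  rw [map_smul, map_sum, ← smul_sub, ← Finset.sum_sub_distrib]
  have step : ∀ k, (∑ j ∈ Finset.range (k + 1), (T ^ j) x)
      - T (∑ j ∈ Finset.range (k + 1), (T ^ j) x) = x - (T ^ (k + 1)) x := by
    intro k
    rw [map_sum, ← Finset.sum_sub_distrib]
    have : ∀ j, (T ^ j) x - T ((T ^ j) x) = (T ^ j) x - (T ^ (j + 1)) x := by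
      intro j; congr 1; rw [pow_succ' T j, ContinuousLinearMap.mul_apply]
    calc ∑ j ∈ Finset.range (k + 1), ((T ^ j) x - T ((T ^ j) x))
        = ∑ j ∈ Finset.range (k + 1), ((T ^ j) x - (T ^ (j + 1)) x) :=
          Finset.sum_congr rfl fun j _ => this j
      _ = (T ^ 0) x - (T ^ (k + 1)) x := Finset.sum_range_sub' (fun j => (T ^ j) x) (k + 1)
      _ = x - (T ^ (k + 1)) x := by rw [pow_zero]; rfl
  rw [Finset.sum_congr rfl fun k _ => step k, Finset.sum_sub_distrib, Finset.sum_const,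
    Finset.card_range, smul_sub, ← Nat.cast_smul_eq_nsmul ℂ, smul_smul,
    inv_mul_cancel₀ (by exact_mod_cast hn), one_smul, ← smul_cesaroMean T n x, smul_smul,
    inv_mul_cancel₀ (by exact_mod_cast hn), one_smul]

lemma cesaro_diff (n : ℕ) (x : E) :
    cesaroMean T (n + 1) x - ((n : ℂ) / ((n : ℂ) + 1)) • cesaroMean T n x
      = ((n : ℂ) + 1)⁻¹ • (T ^ (n + 1)) x := by
  have hne : ((n : ℂ) + 1) ≠ 0 := natCast_add_one_ne n
  have h1 : cesaroMean T (n + 1) x = ((n : ℂ) + 1)⁻¹ • (((n : ℕ) + 1 : ℂ) •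
      cesaroMean T (n + 1) x) := by
    rw [smul_smul, inv_mul_cancel₀ (by push_cast; exact hne), one_smul]
  have h2 : ((n : ℂ) / ((n : ℂ) + 1)) • cesaroMean T n x
      = ((n : ℂ) + 1)⁻¹ • ((n : ℂ) • cesaroMean T n x) := by
    rw [smul_smul, div_eq_mul_inv, mul_comm]
  rw [h2, h1, ← smul_sub]
  congr 1
  push_cast
  rw [show ((n : ℂ) + 1) = (((n + 1 : ℕ) : ℂ)) from by push_cast; ring,
    smul_cesaroMean, smul_cesaroMean, Finset.sum_range_succ]
  rw [add_sub_cancel_left]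
  exact congrFun (FunLike.coe_pow_eq_iterate T (n + 1)) x

end Aux

section Lim

variable {E : Type*} [AddCommGroup E] [Module ℂ E] [TopologicalSpace E]
  [IsTopologicalAddGroup E] [ContinuousSMul ℂ E] (T : E →L[ℂ] E)

lemma tendsto_inv_smul_const (v : E) :
    Tendsto (fun n : ℕ => ((n : ℂ) + 1)⁻¹ • v) atTop (𝓝 0) := by
  have := ((by simpa using tendsto_inv_natCast_add 1 :
    Tendsto (fun n : ℕ => ((n : ℂ) + 1)⁻¹) atTop (𝓝 0))).smul_const v
  simpa using this

lemma tendsto_shift2 (hT : ∀ x : E, Tendsto (fun n : ℕ => (n : ℂ)⁻¹ • (T ^ n) x) atTop (𝓝 0))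
    (x : E) :
    Tendsto (fun n : ℕ => ((n : ℂ) + 1)⁻¹ • (T ^ (n + 2)) x) atTop (𝓝 0) := by
  have h1 : Tendsto (fun n : ℕ => (((n + 2 : ℕ) : ℂ))⁻¹ • (T ^ (n + 2)) x) atTop (𝓝 0) :=
    (hT x).comp (tendsto_add_atTop_nat 2)
  have h2 := tendsto_ratio2.smul h1
  have key : ∀ n : ℕ, (((n : ℂ) + 2) / ((n : ℂ) + 1)) • ((((n + 2 : ℕ) : ℂ))⁻¹ • (T ^ (n + 2)) x)
      = ((n : ℂ) + 1)⁻¹ • (T ^ (n + 2)) x := by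
    intro n
    rw [smul_smul]
    congr 1
    have h2ne : ((n : ℂ) + 2) ≠ 0 := by
      have h := natCast_add_one_ne (n + 1); push_cast at h
      intro hc; exact h (by linear_combination hc)
    push_cast
    field_simp
  have := h2.congr key
  simpa using this

end Lim


/-- On a Montel space, for an operator `T` the following are equivalent: (i) `T` is Cesàro
bounded and `(1/n) Tⁿ x → 0` for every `x`; (ii) `T` is mean ergodic; (iii) `T` is uniformly
mean ergodic. -/
theorem stmt5 {E : Type*} [AddCommGroup E] [Module ℂ E] [Module ℝ E] [IsScalarTower ℝ ℂ E]
    [UniformSpace E] [IsUniformAddGroup E] [ContinuousSMul ℂ E]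
    [LocallyConvexSpace ℝ E] [T2Space E]
    -- `E` is barrelled: every pointwise bounded family of continuous linear operators on `E`
    -- is equicontinuous (Banach–Steinhaus property)
    (hbarrelled : ∀ (ι : Type) (f : ι → E →L[ℂ] E),
      (∀ x : E, Bornology.IsVonNBounded ℂ (Set.range fun i => f i x)) →
        Equicontinuous fun i => ⇑(f i))
    -- every bounded subset of `E` is relatively compact
    (hmontel : ∀ s : Set E, Bornology.IsVonNBounded ℂ s → IsCompact (closure s))
    (T : E →L[ℂ] E) :
    List.TFAE
      [ -- (i) `T` is Cesàro bounded and `(1/n) Tⁿ x → 0` for every `x ∈ E`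
        (Equicontinuous fun n : ℕ => cesaroMean T (n + 1)) ∧
          ∀ x : E, Tendsto (fun n : ℕ => (n : ℂ)⁻¹ • (T ^ n) x) atTop (𝓝 (0 : E)),
        -- (ii) `T` is mean ergodic
        ∃ P : E →L[ℂ] E, ∀ x : E,
          Tendsto (fun n : ℕ => cesaroMean T (n + 1) x) atTop (𝓝 (P x)),
        -- (iii) `T` is uniformly mean ergodic
        ∃ P : E →L[ℂ] E, ∀ s : Set E, Bornology.IsVonNBounded ℂ s →
          TendstoUniformlyOn (fun n : ℕ => cesaroMean T (n + 1)) (⇑P) atTop s ] := by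
  classical
  have hfun : (fun n : ℕ => ⇑(cesaroCLM T (n+1))) = fun n : ℕ => cesaroMean T (n+1) :=
    funext fun n => funext fun x => cesaroCLM_apply T (n+1) x
  -- equicontinuity from pointwise convergence, via barrelledness
  have hEquic : ∀ P : E → E, (∀ x, Tendsto (fun n : ℕ => cesaroMean T (n+1) x) atTop (𝓝 (P x)))
      → Equicontinuous fun n : ℕ => cesaroMean T (n+1) := by
    intro P hP
    have hb : ∀ x : E, Bornology.IsVonNBounded ℂ
        (Set.range fun n : ℕ => (cesaroCLM T (n+1)) x) := by
      intro x
      have h := (hP x).isVonNBounded_range ℂ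
      simpa only [cesaroCLM_apply] using h
    have h := hbarrelled ℕ (fun n => cesaroCLM T (n+1)) hb
    rwa [hfun] at h
  -- (3) → (2)
  tfae_have 3 → 2 := by
    rintro ⟨P, hP⟩
    exact ⟨P, fun x =>
      (hP {x} (Bornology.isVonNBounded_singleton x)).tendsto_at rfl⟩
  -- (2) → (1)
  tfae_have 2 → 1 := by
    rintro ⟨P, hP⟩
    refine ⟨hEquic P hP, fun x => ?_⟩
    have hs : Tendsto (fun m : ℕ => cesaroMean T m x) atTop (𝓝 (P x)) :=
      (tendsto_add_atTop_iff_nat 1).1 (hP x)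
    have hdiff := (hP x).sub (tendsto_ratio1.smul hs)
    rw [one_smul, sub_self] at hdiff
    have h2 : Tendsto (fun n : ℕ => ((n : ℂ) + 1)⁻¹ • (T ^ (n+1)) x) atTop (𝓝 0) :=
      hdiff.congr fun n => cesaro_diff T n x
    rw [show (fun n : ℕ => (n : ℂ)⁻¹ • (T ^ n) x) = fun n : ℕ =>
      (fun m : ℕ => (m : ℂ)⁻¹ • (T ^ m) x) n from rfl, ← tendsto_add_atTop_iff_nat 1]
    refine h2.congr fun n => ?_
    show _ = ((n + 1 : ℕ) : ℂ)⁻¹ • (T ^ (n + 1)) x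
    push_cast
    rfl
  -- (1) → (2)
  tfae_have 1 → 2 := by
    rintro ⟨hec, hT⟩
    set R : Set E := Set.range fun w : E => w - T w with hRdef
    have hR : ∀ z ∈ R, Tendsto (fun n : ℕ => cesaroMean T (n+1) z) atTop (𝓝 0) := by
      rintro z ⟨w, rfl⟩
      have heq : ∀ n : ℕ, cesaroMean T (n+1) (w - T w)
          = ((n : ℂ) + 1)⁻¹ • T w - ((n : ℂ) + 1)⁻¹ • (T ^ (n+2)) w := by
        intro n
        rw [cesaroMean_sub]
        push_cast
        rw [smul_sub]
      have h := (tendsto_inv_smul_const (T w)).sub (tendsto_shift2 T hT w)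
      rw [sub_zero] at h
      exact h.congr fun n => (heq n).symm
    have hNclosed : IsClosed {z : E | Tendsto (fun n : ℕ => cesaroMean T (n+1) z) atTop (𝓝 0)} := by
      have h := hec.isClosed_setOf_tendsto (l := atTop) (f := fun _ : E => (0:E)) continuous_const
      exact h
    have hclosR : ∀ z ∈ closure R,
        Tendsto (fun n : ℕ => cesaroMean T (n+1) z) atTop (𝓝 0) :=
      fun z hz => closure_minimal hR hNclosed hz
    -- bounded orbits
    have horb : ∀ x : E, Bornology.IsVonNBounded ℂ
        (Set.range fun n : ℕ => cesaroMean T (n+1) x) := by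
      intro x V hV
      have hU : {z : E | ∀ n : ℕ, cesaroMean T (n+1) z ∈ V} ∈ 𝓝 (0 : E) := by
        have hU' : {p : E × E | p.2 - p.1 ∈ V} ∈ 𝓤 E := by
          rw [uniformity_eq_comap_nhds_zero E]
          exact preimage_mem_comap hV
        have hev := hec 0 _ hU'
        have h0 : ∀ m : ℕ, cesaroMean T m (0 : E) = 0 := fun m => by simp [cesaroMean]
        filter_upwards [hev] with z hz n
        have := hz n
        simpa [h0] using this
      have habs := Bornology.isVonNBounded_singleton (𝕜 := ℂ) x hU
      filter_upwards [habs] with c hc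
      rintro - ⟨n, rfl⟩
      obtain ⟨z, hz, hzx⟩ := hc rfl
      have : cesaroMean T (n+1) x = c • cesaroMean T (n+1) z := by
        rw [← hzx, ← cesaroCLM_apply, ← cesaroCLM_apply, map_smul]
      show cesaroMean T (n+1) x ∈ c • V
      rw [this]
      exact Set.smul_mem_smul_set (hz n)
    -- pointwise limits exist
    have hlim : ∀ x : E, ∃ y : E,
        Tendsto (fun n : ℕ => cesaroMean T (n+1) x) atTop (𝓝 y) := by
      intro x
      have hK : IsCompact (closure (Set.range fun n : ℕ => cesaroMean T (n+1) x)) :=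
        hmontel _ (horb x)
      have hle : Filter.map (fun n : ℕ => cesaroMean T (n+1) x) atTop
          ≤ 𝓟 (closure (Set.range fun m : ℕ => cesaroMean T (m+1) x)) :=
        le_principal_iff.2 (mem_map.2 (Eventually.of_forall fun n =>
          subset_closure (Set.mem_range_self n)))
      obtain ⟨y, hyK, hy⟩ := hK.exists_mapClusterPt (f := atTop)
        (u := fun n : ℕ => cesaroMean T (n+1) x) hle
      obtain ⟨U, hUle, hU⟩ := mapClusterPt_iff_ultrafilter.1 hy
      have hTy : T y = y := by
        have h1 : Tendsto (fun n : ℕ => T (cesaroMean T (n+1) x)) U (𝓝 (T y)) :=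
          (T.continuous.tendsto y).comp hU
        have h2 : Tendsto (fun n : ℕ => T (cesaroMean T (n+1) x) - cesaroMean T (n+1) x)
            atTop (𝓝 0) := by
          have heq : ∀ n : ℕ, T (cesaroMean T (n+1) x) - cesaroMean T (n+1) x
              = ((n : ℂ) + 1)⁻¹ • (T ^ (n+2)) x - ((n : ℂ) + 1)⁻¹ • T x := by
            intro n
            rw [cesaro_comm_sub]
            push_cast
            rw [smul_sub]
          have h := (tendsto_shift2 T hT x).sub (tendsto_inv_smul_const (T x))
          rw [sub_zero] at h
          exact h.congr fun n => (heq n).symm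
        have h2U : Tendsto (fun n : ℕ => T (cesaroMean T (n+1) x) - cesaroMean T (n+1) x)
            U (𝓝 0) := h2.mono_left hUle
        have h3 : Tendsto (fun n : ℕ => T (cesaroMean T (n+1) x)) U (𝓝 (0 + y)) := by
          refine (h2U.add hU).congr fun n => ?_
          abel
        rw [zero_add] at h3
        exact tendsto_nhds_unique h1 h3
      have hxy : x - y ∈ closure R := by
        have hmem : ∀ n : ℕ, x - cesaroMean T (n+1) x ∈ R := by
          intro n
          obtain ⟨w, hw⟩ := exists_sub_cesaroMean T (n := n+1) n.succ_ne_zero x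
          exact ⟨w, hw.symm⟩
        have htend : Tendsto (fun n : ℕ => x - cesaroMean T (n+1) x) U (𝓝 (x - y)) :=
          tendsto_const_nhds.sub hU
        exact mem_closure_of_tendsto htend (Eventually.of_forall hmem)
      have h0 : Tendsto (fun n : ℕ => cesaroMean T (n+1) (x - y)) atTop (𝓝 0) :=
        hclosR _ hxy
      refine ⟨y, ?_⟩
      have heq : ∀ n : ℕ, cesaroMean T (n+1) (x - y) + y = cesaroMean T (n+1) x := by
        intro n
        have hy' : cesaroMean T (n+1) y = y := cesaroMean_fixed T n.succ_ne_zero hTy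
        rw [← cesaroCLM_apply, map_sub, cesaroCLM_apply, cesaroCLM_apply, hy']
        abel
      have h := h0.add (tendsto_const_nhds (x := y))
      rw [zero_add] at h
      exact h.congr heq
    choose y hy using hlim
    have hadd : ∀ a b : E, y (a + b) = y a + y b := by
      intro a b
      have h1 : Tendsto (fun n : ℕ => cesaroMean T (n+1) (a + b)) atTop (𝓝 (y a + y b)) := by
        refine ((hy a).add (hy b)).congr fun n => ?_
        rw [← cesaroCLM_apply, ← cesaroCLM_apply, ← cesaroCLM_apply, ← map_add]
      exact tendsto_nhds_unique (hy (a + b)) h1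
    have hsmul : ∀ (c : ℂ) (a : E), y (c • a) = c • y a := by
      intro c a
      have h1 : Tendsto (fun n : ℕ => cesaroMean T (n+1) (c • a)) atTop (𝓝 (c • y a)) := by
        refine ((hy a).const_smul c).congr fun n => ?_
        rw [← cesaroCLM_apply, ← cesaroCLM_apply, map_smul]
      exact tendsto_nhds_unique (hy (c • a)) h1
    have hcont : Continuous y := by
      have hptwise : Tendsto (fun n : ℕ => cesaroMean T (n+1)) atTop (𝓝 y) :=
        tendsto_pi_nhds.2 hy
      exact hptwise.continuous_of_equicontinuous hec
    exact ⟨⟨{ toFun := y, map_add' := hadd, map_smul' := fun c a => hsmul c a }, hcont⟩, hy⟩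
  -- (2) → (3)
  tfae_have 2 → 3 := by
    rintro ⟨P, hP⟩
    refine ⟨P, fun s hs => ?_⟩
    have hec : Equicontinuous fun n : ℕ => cesaroMean T (n+1) := hEquic P hP
    have hKc : IsCompact (closure s) := hmontel s hs
    have key := EquicontinuousOn.tendsto_uniformOnFun_iff_pi'
      (X := E) (α := E) (𝔖 := {closure s}) (F := fun n : ℕ => cesaroMean T (n+1))
      (fun K hK => by rw [Set.mem_singleton_iff] at hK; rw [hK]; exact hKc)
      (fun K _ => (hec.equicontinuousOn K)) atTop ⇑P
    have hrhs : Tendsto ((⋃₀ {closure s}).restrict ∘ fun n : ℕ => cesaroMean T (n+1)) atTop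
        (𝓝 ((⋃₀ {closure s}).restrict ⇑P)) := by
      rw [tendsto_pi_nhds]
      intro z
      exact hP z
    have hlhs := key.2 hrhs
    rw [UniformOnFun.tendsto_iff_tendstoUniformlyOn] at hlhs
    exact (hlhs (closure s) rfl).mono subset_closure
  tfae_finish
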